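/- arXiv:1805.03214 — 2 statements merged into one kernel-verified Lean document; each statement's English description precedes it below -/
import Mathlib

section
/- Let ψ₁, φ₁, φ₂ be real numbers with ψ₁ > 0, 2φ₁ − φ₂ > 0, −3φ₁ + 2φ₂ > 0, and suppose none of ψ₁ − 2φ₁ + φ₂, ψ₁ + φ₁ − φ₂, ψ₁ − φ₁ vanishes. Then the triple of signs (sign(ψ₁ − 2φ₁ + φ₂), sign(ψ₁ + φ₁ − φ₂), sign(ψ₁ − φ₁)) is one of exactly the four patterns (+,+,+), (+,+,−), (+,−,−), (−,−,−); moreover each of these four patterns is realized by some point of the cone. -/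
theorem stmt_1 :
    (∀ ψ₁ φ₁ φ₂ : ℝ,
      ψ₁ > 0 → 2 * φ₁ - φ₂ > 0 → -3 * φ₁ + 2 * φ₂ > 0 →
      ψ₁ - 2 * φ₁ + φ₂ ≠ 0 → ψ₁ + φ₁ - φ₂ ≠ 0 → ψ₁ - φ₁ ≠ 0 →
      (Real.sign (ψ₁ - 2 * φ₁ + φ₂), Real.sign (ψ₁ + φ₁ - φ₂), Real.sign (ψ₁ - φ₁)) ∈
        ({(1, 1, 1), (1, 1, -1), (1, -1, -1), (-1, -1, -1)} : Set (ℝ × ℝ × ℝ))) ∧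
    (∀ p ∈ ({(1, 1, 1), (1, 1, -1), (1, -1, -1), (-1, -1, -1)} : Set (ℝ × ℝ × ℝ)),
      ∃ ψ₁ φ₁ φ₂ : ℝ,
        ψ₁ > 0 ∧ 2 * φ₁ - φ₂ > 0 ∧ -3 * φ₁ + 2 * φ₂ > 0 ∧
        (Real.sign (ψ₁ - 2 * φ₁ + φ₂), Real.sign (ψ₁ + φ₁ - φ₂), Real.sign (ψ₁ - φ₁)) = p) := by
  constructor
  · intro ψ₁ φ₁ φ₂ h1 h2 h3 n1 n2 n3
    simp only [Set.mem_insert_iff, Set.mem_singleton_iff, Prod.mk.injEq]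
    rcases lt_or_gt_of_ne n1 with a1 | a1 <;>
      rcases lt_or_gt_of_ne n2 with a2 | a2 <;>
        rcases lt_or_gt_of_ne n3 with a3 | a3
    · exact Or.inr (Or.inr (Or.inr ⟨Real.sign_of_neg a1, Real.sign_of_neg a2, Real.sign_of_neg a3⟩))
    · exfalso; linarith
    · exfalso; linarith
    · exfalso; linarith
    · exact Or.inr (Or.inr (Or.inl ⟨Real.sign_of_pos a1, Real.sign_of_neg a2, Real.sign_of_neg a3⟩))
    · exfalso; linarith
    · exact Or.inr (Or.inl ⟨Real.sign_of_pos a1, Real.sign_of_pos a2, Real.sign_of_neg a3⟩)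
    · exact Or.inl ⟨Real.sign_of_pos a1, Real.sign_of_pos a2, Real.sign_of_pos a3⟩
  · intro p hp
    simp only [Set.mem_insert_iff, Set.mem_singleton_iff] at hp
    rcases hp with h | h | h | h <;> subst h
    · exact ⟨3, 2, 7/2, by norm_num, by norm_num, by norm_num, by
        rw [Real.sign_of_pos (by norm_num), Real.sign_of_pos (by norm_num),
          Real.sign_of_pos (by norm_num)]⟩
    · exact ⟨7/4, 2, 7/2, by norm_num, by norm_num, by norm_num, by
        rw [Real.sign_of_pos (by norm_num), Real.sign_of_pos (by norm_num),
          Real.sign_of_neg (by norm_num)]⟩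
    · exact ⟨1, 2, 7/2, by norm_num, by norm_num, by norm_num, by
        rw [Real.sign_of_pos (by norm_num), Real.sign_of_neg (by norm_num),
          Real.sign_of_neg (by norm_num)]⟩
    · exact ⟨1/4, 2, 7/2, by norm_num, by norm_num, by norm_num, by
        rw [Real.sign_of_neg (by norm_num), Real.sign_of_neg (by norm_num),
          Real.sign_of_neg (by norm_num)]⟩
end

section
/- Let K, S, T be elements of a commutative ℚ-algebra. Define h21 = 29K² + 15KS + 24KT + 3S² + 6ST + 6T² + 14, and define the charged hypermultiplet count nH_ch = 2·n₂₁ + 6·n₁₇ + 14·n₂₇ + 2·n₃₁ + 12·n₁₁₄, where n₂₇ = (1/2)ST, n₃₁ = (1/2)(KS + S² + 2), n₂₁ = −S(8K + 2S + (7/2)T), n₁₁₄ = (1/2)(KT + T² + 2), n₁₇ = −T(5K + S + 2T). Then nH := (h21 + 1) + nH_ch = 29K² + 29, and consequently nH − 17 + 29(9 − K²) − 273 = 0. -/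
theorem stmt_7 (R : Type*) [CommRing R] [Algebra ℚ R] (K S T : R)
    (n27 n31 n21 n114 n17 h21dim nHch nH : R)
    (h27 : n27 = ((1:ℚ)/2) • (S * T))
    (h31 : n31 = ((1:ℚ)/2) • (K * S + S ^ 2 + 2))
    (h21' : n21 = -(S * (8 * K + 2 * S + ((7:ℚ)/2) • T)))
    (h114 : n114 = ((1:ℚ)/2) • (K * T + T ^ 2 + 2))
    (h17 : n17 = -(T * (5 * K + S + 2 * T)))
    (hh21 : h21dim = 29 * K ^ 2 + 15 * K * S + 24 * K * T + 3 * S ^ 2 + 6 * S * T + 6 * T ^ 2 + 14)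
    (hch : nHch = 2 * n21 + 6 * n17 + 14 * n27 + 2 * n31 + 12 * n114)
    (hnH : nH = (h21dim + 1) + nHch) :
    nH = 29 * K ^ 2 + 29 ∧ nH - 17 + 29 * (9 - K ^ 2) - 273 = 0 := by
  subst h27 h31 h21' h114 h17 hh21 hch hnH
  simp only [Algebra.smul_def]
  have h2 : algebraMap ℚ R ((1:ℚ)/2) * 2 = 1 := by
    rw [← map_ofNat (algebraMap ℚ R) 2, ← map_mul]
    norm_num
  have h7 : algebraMap ℚ R ((7:ℚ)/2) * 2 = 7 := by
    rw [← map_ofNat (algebraMap ℚ R) 2, ← map_mul, show (7:ℚ)/2*2 = 7 by norm_num,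
      map_ofNat]
  constructor <;> linear_combination (7 * S * T + K * S + S^2 + K * T + 6 * T^2 + 5 * K * T + 14) * h2 - S * T * h7
end
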